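/- Two-sided sub-Gaussian mixture confidence sequence for time-varying means: let Z_1, Z_2, ... be independent [0,1]-valued random variables with E[Z_i] = r μ_i* + (1-r)/2 for fixed r ∈ (0,1] and μ_i* ∈ [0,1]. Define μ̂_t := (Σ_{i=1}^t (Z_i − (1-r)/2))/(tr) and B_t := sqrt( ((tβ² + 1)/(2(trβ)²)) · log( √(tβ²+1)/α ) ) for any β > 0. Then P(∀ t ≥ 1, |μ̂_t − (1/t) Σ_{i=1}^t μ_i*| ≤ B_t) ≥ 1 − α. -/

import Mathlib

open MeasureTheory ProbabilityTheory Finset ENNReal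


lemma hoeff_v_pos {m : ℝ} (hm0 : 0 ≤ m) (hm1 : m ≤ 1) (x : ℝ) :
    0 < 1 - m + m * Real.exp x := by
  rcases eq_or_lt_of_le hm0 with h | h
  · simp [← h]
  · have := Real.exp_pos x
    nlinarith

lemma hoeff_core {m : ℝ} (hm0 : 0 ≤ m) (hm1 : m ≤ 1) (x : ℝ) :
    1 - m + m * Real.exp x ≤ Real.exp (x * m + x ^ 2 / 8) := by
  set v : ℝ → ℝ := fun x => 1 - m + m * Real.exp x with hv_def
  have hv : ∀ x, 0 < v x := fun x => hoeff_v_pos hm0 hm1 x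
  set g : ℝ → ℝ := fun x => x * m + x ^ 2 / 8 - Real.log (v x) with hg_def
  set g1 : ℝ → ℝ := fun x => m + x / 4 - m * Real.exp x / v x with hg1_def
  have hdv : ∀ x, HasDerivAt v (m * Real.exp x) x := fun x =>
    ((Real.hasDerivAt_exp x).const_mul m).const_add (1 - m)
  have hdg : ∀ x, HasDerivAt g (g1 x) x := by
    intro x
    have h1 : HasDerivAt (fun x : ℝ => x * m + x ^ 2 / 8) (m + x / 4) x := by
      have := ((hasDerivAt_id x).mul_const m).add ((hasDerivAt_pow 2 x).div_const 8)
      refine this.congr_deriv ?_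
      norm_num
      ring
    have h2 : HasDerivAt (fun x => Real.log (v x)) (m * Real.exp x / v x) x :=
      (hdv x).log (ne_of_gt (hv x))
    exact h1.sub h2
  have hdg1 : ∀ x, HasDerivAt g1 (1 / 4 - m * Real.exp x * (1 - m) / (v x) ^ 2) x := by
    intro x
    have h1 : HasDerivAt (fun x : ℝ => m + x / 4) (1 / 4) x := by
      simpa using (((hasDerivAt_id x).div_const 4).const_add m)
    have h2 : HasDerivAt (fun x => m * Real.exp x / v x)
        ((m * Real.exp x * v x - m * Real.exp x * (m * Real.exp x)) / (v x) ^ 2) x :=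
      ((Real.hasDerivAt_exp x).const_mul m).div (hdv x) (ne_of_gt (hv x))
    have := h1.sub h2
    refine this.congr_deriv ?_
    have : v x = 1 - m + m * Real.exp x := rfl
    field_simp [ne_of_gt (hv x)]
    ring
  have hg1_deriv_nonneg : ∀ x, 0 ≤ 1 / 4 - m * Real.exp x * (1 - m) / (v x) ^ 2 := by
    intro x
    rw [sub_nonneg, div_le_iff₀ (pow_pos (hv x) 2)]
    have hvx : v x = 1 - m + m * Real.exp x := rfl
    nlinarith [sq_nonneg ((1 - m) - m * Real.exp x), Real.exp_pos x]
  have hg1_mono : Monotone g1 := by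
    refine monotone_of_deriv_nonneg (fun x => (hdg1 x).differentiableAt) (fun x => ?_)
    rw [(hdg1 x).deriv]
    exact hg1_deriv_nonneg x
  have hg1_zero : g1 0 = 0 := by
    have : v 0 = 1 := by simp [hv_def]
    simp [hg1_def, this]
  have hg_zero : g 0 = 0 := by
    have : v 0 = 1 := by simp [hv_def]
    simp [hg_def, this]
  have hg_nonneg : ∀ x, 0 ≤ g x := by
    intro x
    have hdiff : ∀ y, DifferentiableAt ℝ g y := fun y => (hdg y).differentiableAt
    rcases le_total 0 x with hx | hx
    · have hmono : MonotoneOn g (Set.Ici 0) := by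
        refine monotoneOn_of_deriv_nonneg (convex_Ici 0)
          (fun y _ => (hdiff y).continuousAt.continuousWithinAt) ?_ ?_
        · intro y hy
          exact (hdiff y).differentiableWithinAt
        · intro y hy
          rw [(hdg y).deriv]
          rw [interior_Ici] at hy
          have h := hg1_mono (le_of_lt hy)
          rw [hg1_zero] at h
          linarith
      have h := hmono Set.self_mem_Ici hx hx
      rw [hg_zero] at h
      exact h
    · have hanti : AntitoneOn g (Set.Iic 0) := by
        refine antitoneOn_of_deriv_nonpos (convex_Iic 0)
          (fun y _ => (hdiff y).continuousAt.continuousWithinAt) ?_ ?_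
        · intro y hy
          exact (hdiff y).differentiableWithinAt
        · intro y hy
          rw [(hdg y).deriv]
          rw [interior_Iic] at hy
          have h := hg1_mono (le_of_lt hy)
          rw [hg1_zero] at h
          linarith
      have h := hanti hx Set.self_mem_Iic hx
      rw [hg_zero] at h
      exact h
  have hgx := hg_nonneg x
  have hlog : Real.log (v x) ≤ x * m + x ^ 2 / 8 := by
    have : g x = x * m + x ^ 2 / 8 - Real.log (v x) := rfl
    linarith [this ▸ hgx]
  have : v x ≤ Real.exp (x * m + x ^ 2 / 8) := by
    calc v x = Real.exp (Real.log (v x)) := (Real.exp_log (hv x)).symm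
      _ ≤ Real.exp (x * m + x ^ 2 / 8) := Real.exp_le_exp.2 hlog
  exact this

lemma gauss_integrable {b : ℝ} (hb : 0 < b) (s : ℝ) :
    Integrable (fun l : ℝ => Real.exp (l * s - b * l ^ 2)) := by
  have key : ∀ l : ℝ, Real.exp (l * s - b * l ^ 2) =
      Real.exp (s ^ 2 / (4 * b)) * Real.exp (-b * (l - s / (2 * b)) ^ 2) := by
    intro l
    rw [← Real.exp_add]
    congr 1
    field_simp
    ring
  simp_rw [key]
  exact ((integrable_exp_neg_mul_sq hb).comp_sub_right (s / (2 * b))).const_mul _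

lemma gauss_int {b : ℝ} (hb : 0 < b) (s : ℝ) :
    ∫ l : ℝ, Real.exp (l * s - b * l ^ 2) =
      Real.sqrt (Real.pi / b) * Real.exp (s ^ 2 / (4 * b)) := by
  have key : ∀ l : ℝ, Real.exp (l * s - b * l ^ 2) =
      Real.exp (s ^ 2 / (4 * b)) * Real.exp (-b * (l - s / (2 * b)) ^ 2) := by
    intro l
    rw [← Real.exp_add]
    congr 1
    field_simp
    ring
  simp_rw [key]
  rw [MeasureTheory.integral_const_mul,
    integral_sub_right_eq_self (μ := volume) (fun l => Real.exp (-b * l ^ 2)) (s / (2 * b)),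
    integral_gaussian, mul_comm]

lemma hoeff_mgf {Ω : Type*} [MeasurableSpace Ω] {μ : Measure Ω} [IsProbabilityMeasure μ]
    {X : Ω → ℝ} (hX : Measurable X) (hb : ∀ᵐ ω ∂μ, X ω ∈ Set.Icc (0 : ℝ) 1) (l : ℝ) :
    ∫⁻ ω, ENNReal.ofReal (Real.exp (l * (X ω - ∫ ω', X ω' ∂μ))) ∂μ ≤
      ENNReal.ofReal (Real.exp (l ^ 2 / 8)) := by
  set m : ℝ := ∫ ω', X ω' ∂μ with hm_def
  have hXint : Integrable X μ := by
    refine (integrable_const (1 : ℝ)).mono' hX.aestronglyMeasurable ?_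
    filter_upwards [hb] with ω hω
    rw [Real.norm_eq_abs, abs_le]
    exact ⟨by linarith [hω.1], hω.2⟩
  have hm0 : 0 ≤ m := integral_nonneg_of_ae (by filter_upwards [hb] with ω hω using hω.1)
  have hm1 : m ≤ 1 := by
    have h := integral_mono_ae hXint (integrable_const 1)
      (by filter_upwards [hb] with ω hω using hω.2)
    simpa using h
  -- integrability of exp(l X)
  have hbound : ∀ᵐ ω ∂μ, Real.exp (l * X ω) ≤ Real.exp |l| := by
    filter_upwards [hb] with ω hω
    apply Real.exp_le_exp.2
    rcases le_total 0 l with h | h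
    · calc l * X ω ≤ l * 1 := by nlinarith [hω.2, hω.1]
        _ ≤ |l| := by rw [mul_one]; exact le_abs_self l
    · calc l * X ω ≤ 0 := mul_nonpos_of_nonpos_of_nonneg h hω.1
        _ ≤ |l| := abs_nonneg l
  have hint : Integrable (fun ω => Real.exp (l * X ω)) μ := by
    refine (integrable_const (Real.exp |l|)).mono' ((measurable_const.mul hX).exp).aestronglyMeasurable ?_
    filter_upwards [hbound] with ω hω
    rw [Real.norm_eq_abs, abs_of_pos (Real.exp_pos _)]
    exact hω
  -- pointwise convexity bound
  have hconv : ∀ᵐ ω ∂μ, Real.exp (l * X ω) ≤ 1 - X ω + X ω * Real.exp l := by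
    filter_upwards [hb] with ω hω
    have := convexOn_exp.2 (Set.mem_univ (0 : ℝ)) (Set.mem_univ l)
      (by linarith [hω.2] : (0:ℝ) ≤ 1 - X ω) hω.1 (by ring)
    simp only [smul_eq_mul, mul_zero, zero_add, Real.exp_zero, mul_one] at this
    calc Real.exp (l * X ω) = Real.exp (X ω * l) := by rw [mul_comm]
      _ ≤ (1 - X ω) * 1 + X ω * Real.exp l := by simpa using this
      _ = 1 - X ω + X ω * Real.exp l := by ring
  have hEexp : ∫ ω, Real.exp (l * X ω) ∂μ ≤ 1 - m + m * Real.exp l := by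
    have hfun : (fun ω => 1 - X ω + X ω * Real.exp l) =
        fun ω => 1 + (Real.exp l - 1) * X ω := by funext ω; ring
    have h2 : Integrable (fun ω => 1 - X ω + X ω * Real.exp l) μ := by
      rw [hfun]; exact (integrable_const 1).add (hXint.const_mul _)
    calc ∫ ω, Real.exp (l * X ω) ∂μ ≤ ∫ ω, (1 - X ω + X ω * Real.exp l) ∂μ :=
        integral_mono_ae hint h2 hconv
      _ = 1 - m + m * Real.exp l := by
        rw [hfun, integral_add (integrable_const 1) (hXint.const_mul _),
          MeasureTheory.integral_const_mul]
        simp only [integral_const, measure_univ, probReal_univ, ENNReal.toReal_one, smul_eq_mul, one_mul,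
          ← hm_def]
        ring
  -- assemble
  have hintshift : Integrable (fun ω => Real.exp (l * (X ω - m))) μ := by
    have : (fun ω => Real.exp (l * (X ω - m))) =
        fun ω => Real.exp (l * X ω) * Real.exp (-(l * m)) := by
      funext ω; rw [← Real.exp_add]; ring_nf
    rw [this]
    exact hint.mul_const _
  rw [← ofReal_integral_eq_lintegral_ofReal hintshift
    (Filter.Eventually.of_forall fun ω => (Real.exp_pos _).le)]
  apply ENNReal.ofReal_le_ofReal
  have hrw : ∫ ω, Real.exp (l * (X ω - m)) ∂μ =
      (∫ ω, Real.exp (l * X ω) ∂μ) * Real.exp (-(l * m)) := by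
    rw [← integral_mul_const]
    congr 1; funext ω; rw [← Real.exp_add]; ring_nf
  rw [hrw]
  calc (∫ ω, Real.exp (l * X ω) ∂μ) * Real.exp (-(l * m))
      ≤ (1 - m + m * Real.exp l) * Real.exp (-(l * m)) :=
        mul_le_mul_of_nonneg_right hEexp (Real.exp_pos _).le
    _ ≤ Real.exp (l * m + l ^ 2 / 8) * Real.exp (-(l * m)) :=
        mul_le_mul_of_nonneg_right (hoeff_core hm0 hm1 l) (Real.exp_pos _).le
    _ = Real.exp (l ^ 2 / 8) := by rw [← Real.exp_add]; ring_nf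

set_option maxHeartbeats 2000000 in
theorem two_sided_mixture_cs_time_varying_means
    {Ω : Type*} [MeasurableSpace Ω] (μ : Measure Ω) [IsProbabilityMeasure μ]
    (Z : ℕ → Ω → ℝ) (μs : ℕ → ℝ) (r β α : ℝ)
    (hr : r ∈ Set.Ioc (0 : ℝ) 1) (hβ : 0 < β) (hα : α ∈ Set.Ioo (0 : ℝ) 1)
    (hμs : ∀ i, μs i ∈ Set.Icc (0 : ℝ) 1)
    (hmeas : ∀ i, Measurable (Z i))
    (hindep : iIndepFun Z μ)
    (hbdd : ∀ i, ∀ᵐ ω ∂μ, Z i ω ∈ Set.Icc (0 : ℝ) 1)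
    (hmean : ∀ i, ∫ ω, Z i ω ∂μ = r * μs i + (1 - r) / 2) :
    ENNReal.ofReal (1 - α) ≤
      μ {ω | ∀ t : ℕ, 1 ≤ t →
        |(∑ i ∈ Finset.Icc 1 t, (Z i ω - (1 - r) / 2)) / (t * r) -
            (1 / t) * ∑ i ∈ Finset.Icc 1 t, μs i| ≤
          Real.sqrt ((t * β ^ 2 + 1) / (2 * (t * r * β) ^ 2) *
            Real.log (Real.sqrt (t * β ^ 2 + 1) / α))} := by
  obtain ⟨hr0, hr1⟩ := hr
  obtain ⟨hα0, hα1⟩ := hα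
  -- basic notation
  set X : ℕ → Ω → ℝ := fun i ω => Z i ω - (r * μs i + (1 - r) / 2) with hX_def
  set S : ℕ → Ω → ℝ := fun t ω => ∑ i ∈ Finset.Icc 1 t, X i ω with hS_def
  set b : ℕ → ℝ := fun t => ((t : ℝ) * β ^ 2 + 1) / (8 * β ^ 2) with hb_def
  have hb_pos : ∀ t : ℕ, 0 < b t := by
    intro t
    have : (0:ℝ) ≤ (t : ℝ) := Nat.cast_nonneg t
    apply div_pos (by nlinarith) (by positivity)
  have hS_meas : ∀ t, Measurable (S t) :=
    fun t => Finset.measurable_sum _ (fun i _ => (hmeas i).sub measurable_const)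
  set G : ℕ → Ω → ℝ≥0∞ := fun t ω =>
    ENNReal.ofReal (Real.sqrt (Real.pi / b t) * Real.exp (S t ω ^ 2 / (4 * b t))) with hG_def
  have hG_meas : ∀ t, Measurable (G t) := by
    intro t
    apply Measurable.ennreal_ofReal
    exact (((((hS_meas t).pow measurable_const)).div_const _).exp).const_mul _
  have hGrep : ∀ t ω, G t ω =
      ∫⁻ l : ℝ, ENNReal.ofReal (Real.exp (l * S t ω - b t * l ^ 2)) := by
    intro t ω
    calc G t ω = ENNReal.ofReal (∫ l : ℝ, Real.exp (l * S t ω - b t * l ^ 2)) := by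
          rw [gauss_int (hb_pos t)]
      _ = ∫⁻ l : ℝ, ENNReal.ofReal (Real.exp (l * S t ω - b t * l ^ 2)) :=
          ofReal_integral_eq_lintegral_ofReal (gauss_integrable (hb_pos t) _)
            (Filter.Eventually.of_forall fun l => (Real.exp_pos _).le)
  -- sigma-algebras
  set F : ℕ → MeasurableSpace Ω := fun k =>
    ⨆ i ∈ (↑(Finset.Icc 1 k) : Set ℕ), MeasurableSpace.comap (Z i) inferInstance with hF_def
  have hF_le : ∀ k, F k ≤ ‹MeasurableSpace Ω› := by
    intro k
    refine iSup₂_le fun i _ => ?_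
    exact (hmeas i).comap_le
  have hZF : ∀ k i, i ∈ Finset.Icc 1 k → Measurable[F k] (Z i) := by
    intro k i hi
    exact (Measurable.of_comap_le le_rfl).mono
      (le_biSup (fun i => MeasurableSpace.comap (Z i) inferInstance)
        (Finset.mem_coe.2 hi)) le_rfl
  have hSF : ∀ k j, j ≤ k → Measurable[F k] (S j) := by
    intro k j hjk
    refine Finset.measurable_sum _ (fun i hi => ?_)
    have hik : i ∈ Finset.Icc 1 k := by
      simp only [Finset.mem_Icc] at hi ⊢
      exact ⟨hi.1, hi.2.trans hjk⟩
    exact Measurable.sub (hZF k i hik) measurable_const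
  have hGF : ∀ k j, j ≤ k → Measurable[F k] (G j) := by
    intro k j hjk
    apply Measurable.ennreal_ofReal
    exact ((((hSF k j hjk).pow measurable_const).div_const _).exp).const_mul _
  have hInd : ∀ k, Indep (F k) (MeasurableSpace.comap (Z (k + 1)) inferInstance) μ := by
    intro k
    have hdisj : Disjoint (↑(Finset.Icc 1 k) : Set ℕ) ({k + 1} : Set ℕ) := by
      rw [Set.disjoint_singleton_right]
      simp
    have h := ProbabilityTheory.indep_iSup_of_disjoint
      (fun i => (hmeas i).comap_le) hindep.iIndep hdisj
    exact indep_of_indep_of_le_right h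
      (le_biSup (fun i => MeasurableSpace.comap (Z i) inferInstance) rfl)
  -- the supermartingale step
  have hstep : ∀ k (A : Set Ω), MeasurableSet[F k] A →
      ∫⁻ ω in A, G (k + 1) ω ∂μ ≤ ∫⁻ ω in A, G k ω ∂μ := by
    intro k A hA
    have hA' : MeasurableSet A := hF_le k A hA
    have hswap : ∀ t : ℕ, ∫⁻ ω in A, G t ω ∂μ =
        ∫⁻ l : ℝ, ∫⁻ ω in A, ENNReal.ofReal (Real.exp (l * S t ω - b t * l ^ 2)) ∂μ := by
      intro t
      rw [lintegral_congr (fun ω => hGrep t ω)]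
      refine lintegral_lintegral_swap ?_
      apply Measurable.aemeasurable
      apply Measurable.ennreal_ofReal
      apply Measurable.exp
      exact (measurable_snd.mul ((hS_meas t).comp measurable_fst)).sub
        (measurable_const.mul (measurable_snd.pow measurable_const))
    rw [hswap (k + 1), hswap k]
    refine lintegral_mono fun l => ?_
    have hsum : ∀ ω, S (k + 1) ω = S k ω + X (k + 1) ω := by
      intro ω
      simp only [hS_def]
      rw [Finset.sum_Icc_succ_top (Nat.one_le_iff_ne_zero.2 (Nat.succ_ne_zero k))]
    have hb_succ : b (k + 1) = b k + 1 / 8 := by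
      simp only [hb_def]
      push_cast
      field_simp
      ring
    have hsplit : ∀ ω, ENNReal.ofReal (Real.exp (l * S (k + 1) ω - b (k + 1) * l ^ 2)) =
        ENNReal.ofReal (Real.exp (l * S k ω - b k * l ^ 2)) *
          ENNReal.ofReal (Real.exp (l * X (k + 1) ω)) *
          ENNReal.ofReal (Real.exp (-(l ^ 2 / 8))) := by
      intro ω
      rw [← ENNReal.ofReal_mul (Real.exp_pos _).le, ← ENNReal.ofReal_mul
        (mul_nonneg (Real.exp_pos _).le (Real.exp_pos _).le), ← Real.exp_add, ← Real.exp_add]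
      congr 1
      rw [hsum ω, hb_succ]
      ring
    -- set up the two factors
    set f : Ω → ℝ≥0∞ := fun ω => ENNReal.ofReal (Real.exp (l * S k ω - b k * l ^ 2)) with hf_def
    set g : Ω → ℝ≥0∞ := fun ω => ENNReal.ofReal (Real.exp (l * X (k + 1) ω)) with hg_def
    have hf_measF : Measurable[F k] f :=
      Measurable.ennreal_ofReal ((((hSF k k le_rfl).const_mul l).sub measurable_const).exp)
    have hg_measC : Measurable[MeasurableSpace.comap (Z (k + 1)) inferInstance] g := by
      apply Measurable.ennreal_ofReal
      apply Measurable.exp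
      exact Measurable.const_mul
        ((Measurable.of_comap_le le_rfl).sub measurable_const) l
    have hf_meas : Measurable f := hf_measF.mono (hF_le k) le_rfl
    have hg_meas : Measurable g := hg_measC.mono ((hmeas (k + 1)).comap_le) le_rfl
    have hindic : ∀ ω, A.indicator (fun ω => f ω * g ω) ω = A.indicator f ω * g ω := by
      intro ω
      by_cases hω : ω ∈ A <;> simp [hω]
    calc ∫⁻ ω in A, ENNReal.ofReal (Real.exp (l * S (k + 1) ω - b (k + 1) * l ^ 2)) ∂μ
        = ∫⁻ ω in A, f ω * g ω * ENNReal.ofReal (Real.exp (-(l ^ 2 / 8))) ∂μ :=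
          lintegral_congr fun ω => hsplit ω
      _ = (∫⁻ ω in A, f ω * g ω ∂μ) * ENNReal.ofReal (Real.exp (-(l ^ 2 / 8))) :=
          lintegral_mul_const _ (hf_meas.mul hg_meas)
      _ = (∫⁻ ω, A.indicator (fun ω => f ω * g ω) ω ∂μ) * ENNReal.ofReal (Real.exp (-(l ^ 2 / 8))) := by
          rw [lintegral_indicator hA']
      _ = (∫⁻ ω, A.indicator f ω * g ω ∂μ) * ENNReal.ofReal (Real.exp (-(l ^ 2 / 8))) := by
          rw [lintegral_congr hindic]
      _ = (∫⁻ ω, A.indicator f ω ∂μ) * (∫⁻ ω, g ω ∂μ) * ENNReal.ofReal (Real.exp (-(l ^ 2 / 8))) := by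
          rw [lintegral_mul_eq_lintegral_mul_lintegral_of_independent_measurableSpace
            (hF_le k) ((hmeas (k + 1)).comap_le) (hInd k)
            (hf_measF.indicator hA) hg_measC]
      _ ≤ (∫⁻ ω, A.indicator f ω ∂μ) * ENNReal.ofReal (Real.exp (l ^ 2 / 8)) *
            ENNReal.ofReal (Real.exp (-(l ^ 2 / 8))) := by
          refine mul_le_mul_left (mul_le_mul_right ?_ _) _
          have hXrw : (fun ω => Real.exp (l * X (k + 1) ω)) =
              fun ω => Real.exp (l * (Z (k + 1) ω - ∫ ω', Z (k + 1) ω' ∂μ)) := by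
            funext ω
            rw [hmean (k + 1)]
          calc ∫⁻ ω, g ω ∂μ
              = ∫⁻ ω, ENNReal.ofReal (Real.exp (l * (Z (k + 1) ω - ∫ ω', Z (k + 1) ω' ∂μ))) ∂μ := by
                simp only [hg_def, hX_def, hmean (k + 1)]
            _ ≤ ENNReal.ofReal (Real.exp (l ^ 2 / 8)) := hoeff_mgf (hmeas (k + 1)) (hbdd (k + 1)) l
      _ = ∫⁻ ω, A.indicator f ω ∂μ := by
          rw [mul_assoc, ← ENNReal.ofReal_mul (Real.exp_pos _).le, ← Real.exp_add]
          simp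
      _ = ∫⁻ ω in A, f ω ∂μ := lintegral_indicator hA' _
  -- threshold and stopped sets
  set c : ℝ≥0∞ := ENNReal.ofReal (Real.sqrt (Real.pi / b 0) / α) with hc_def
  set T : ℕ → Set Ω := fun n => {ω | ∀ j ≤ n, G j ω < c} with hT_def
  have hT_measF : ∀ n, MeasurableSet[F n] (T n) := by
    intro n
    have : T n = ⋂ j ∈ Set.Iic n, {ω | G j ω < c} := by
      ext ω
      simp [hT_def, Set.mem_iInter]
    rw [this]
    exact MeasurableSet.biInter (Set.to_countable _)
      (fun j hj => measurableSet_lt (hGF n j hj) measurable_const)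
  have hT_meas : ∀ n, MeasurableSet (T n) := fun n => hF_le n _ (hT_measF n)
  have hS0 : ∀ ω, S 0 ω = 0 := by
    intro ω
    simp [hS_def]
  have hG0 : ∀ ω, G 0 ω = ENNReal.ofReal (Real.sqrt (Real.pi / b 0)) := by
    intro ω
    simp [hG_def, hS0 ω]
  have hG0int : ∫⁻ ω, G 0 ω ∂μ = ENNReal.ofReal (Real.sqrt (Real.pi / b 0)) := by
    rw [lintegral_congr hG0]
    simp
  -- Markov-type bound on sets where G n exceeds c
  have hmark : ∀ (n : ℕ) (B : Set Ω), (∀ ω ∈ B, c ≤ G n ω) →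
      c * μ B ≤ ∫⁻ ω in B, G n ω ∂μ := by
    intro n B hc
    calc c * μ B = ∫⁻ _ in B, c ∂μ := (setLIntegral_const B c).symm
      _ ≤ ∫⁻ ω in B, G n ω ∂μ := setLIntegral_mono (hG_meas n) hc
  -- Ville's inequality by induction
  have hVille : ∀ n, c * μ (T n)ᶜ + ∫⁻ ω in T n, G n ω ∂μ ≤
      ENNReal.ofReal (Real.sqrt (Real.pi / b 0)) := by
    intro n
    induction n with
    | zero =>
      have hT0c : (T 0)ᶜ = {ω | c ≤ G 0 ω} := by
        ext ω
        simp [hT_def, Nat.le_zero, not_lt]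
      have h1 : c * μ (T 0)ᶜ ≤ ∫⁻ ω in (T 0)ᶜ, G 0 ω ∂μ := by
        refine hmark 0 _ ?_
        intro ω hω
        rw [hT0c] at hω
        exact hω
      calc c * μ (T 0)ᶜ + ∫⁻ ω in T 0, G 0 ω ∂μ
          ≤ ∫⁻ ω in (T 0)ᶜ, G 0 ω ∂μ + ∫⁻ ω in T 0, G 0 ω ∂μ := add_le_add_left h1 _
        _ = ∫⁻ ω, G 0 ω ∂μ := by
            rw [add_comm, lintegral_add_compl _ (hT_meas 0)]
        _ = ENNReal.ofReal (Real.sqrt (Real.pi / b 0)) := hG0int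
    | succ n ih =>
      have hTsucc : T (n + 1) = T n ∩ {ω | G (n + 1) ω < c} := by
        ext ω
        simp only [hT_def, Set.mem_setOf_eq, Set.mem_inter_iff]
        constructor
        · exact fun h => ⟨fun j hj => h j (hj.trans (Nat.le_succ n)), h (n + 1) le_rfl⟩
        · rintro ⟨h1, h2⟩ j hj
          rcases Nat.lt_succ_iff_lt_or_eq.1 (Nat.lt_succ_of_le hj) with h | h
          · exact h1 j (Nat.lt_succ_iff.1 h)
          · rw [h]; exact h2
      set U : Set Ω := T n ∩ {ω | c ≤ G (n + 1) ω} with hU_def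
      have hU_meas : MeasurableSet U :=
        (hT_meas n).inter (measurableSet_le measurable_const (hG_meas (n + 1)))
      have hpart : T n = T (n + 1) ∪ U := by
        rw [hTsucc]
        ext ω
        by_cases h : c ≤ G (n + 1) ω
        · simp [hU_def, h, not_lt.2 h]
        · simp [hU_def, h, not_le.1 h]
      have hdisj : Disjoint (T (n + 1)) U := by
        rw [Set.disjoint_left]
        rintro ω hω₁ hω₂
        rw [hTsucc] at hω₁
        have h2 : c ≤ G (n + 1) ω := hω₂.2
        have h1 : G (n + 1) ω < c := hω₁.2
        exact absurd h2 (not_le.2 h1)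
      have hdisj2 : Disjoint (T n)ᶜ U := by
        rw [Set.disjoint_left]
        rintro ω hω₁ hω₂
        exact hω₁ hω₂.1
      have hcomp : (T (n + 1))ᶜ = (T n)ᶜ ∪ U := by
        rw [hTsucc, Set.compl_inter]
        ext ω
        by_cases h : ω ∈ T n
        · simp [hU_def, h, not_lt]
        · simp [hU_def, h]
      have hmeasure : μ (T (n + 1))ᶜ = μ (T n)ᶜ + μ U := by
        rw [hcomp]
        exact measure_union hdisj2 hU_meas
      calc c * μ (T (n + 1))ᶜ + ∫⁻ ω in T (n + 1), G (n + 1) ω ∂μ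
          = c * μ (T n)ᶜ + (c * μ U + ∫⁻ ω in T (n + 1), G (n + 1) ω ∂μ) := by
            rw [hmeasure, mul_add, add_assoc]
        _ ≤ c * μ (T n)ᶜ + (∫⁻ ω in U, G (n + 1) ω ∂μ + ∫⁻ ω in T (n + 1), G (n + 1) ω ∂μ) := by
            exact add_le_add_right (add_le_add_left (hmark (n + 1) U (fun ω hω => hω.2)) _) _
        _ = c * μ (T n)ᶜ + ∫⁻ ω in T n, G (n + 1) ω ∂μ := by
            rw [hpart, lintegral_union hU_meas hdisj, add_comm (∫⁻ ω in U, G (n + 1) ω ∂μ)]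
        _ ≤ c * μ (T n)ᶜ + ∫⁻ ω in T n, G n ω ∂μ :=
            add_le_add_right (hstep n (T n) (hT_measF n)) _
        _ ≤ ENNReal.ofReal (Real.sqrt (Real.pi / b 0)) := ih
  -- bound on failure probability
  have hs0_pos : 0 < Real.sqrt (Real.pi / b 0) :=
    Real.sqrt_pos.2 (div_pos Real.pi_pos (hb_pos 0))
  have hc0 : c ≠ 0 := by
    simp only [hc_def, ne_eq, ENNReal.ofReal_eq_zero, not_le]
    positivity
  have hctop : c ≠ ⊤ := ENNReal.ofReal_ne_top
  have hTcompl : ∀ n, μ (T n)ᶜ ≤ ENNReal.ofReal α := by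
    intro n
    have h1 : c * μ (T n)ᶜ ≤ ENNReal.ofReal (Real.sqrt (Real.pi / b 0)) :=
      le_trans le_self_add (hVille n)
    have h2 : μ (T n)ᶜ ≤ ENNReal.ofReal (Real.sqrt (Real.pi / b 0)) / c :=
      (ENNReal.le_div_iff_mul_le (Or.inl hc0) (Or.inl hctop)).2 (by rwa [mul_comm])
    refine h2.trans (le_of_eq ?_)
    rw [hc_def, ← ENNReal.ofReal_div_of_pos (div_pos hs0_pos hα0)]
    congr 1
    field_simp
  -- limit
  have hT_anti : ∀ n, T (n + 1) ⊆ T n := by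
    intro n ω hω j hj
    exact hω j (hj.trans (Nat.le_succ n))
  have hmono : Monotone (fun n => (T n)ᶜ) :=
    monotone_nat_of_le_succ (fun n => Set.compl_subset_compl.2 (hT_anti n))
  have hbad : μ (⋃ n, (T n)ᶜ) ≤ ENNReal.ofReal α := by
    rw [hmono.measure_iUnion]
    exact iSup_le hTcompl
  have hgoodset : (⋂ n, T n) = (⋃ n, (T n)ᶜ)ᶜ := by
    simp [Set.compl_iUnion]
  have hgood : ENNReal.ofReal (1 - α) ≤ μ (⋂ n, T n) := by
    rw [hgoodset, prob_compl_eq_one_sub (MeasurableSet.iUnion fun n => (hT_meas n).compl)]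
    rw [ENNReal.ofReal_sub _ hα0.le, ENNReal.ofReal_one]
    exact tsub_le_tsub_left hbad 1
  refine le_trans hgood (measure_mono ?_)
  -- event inclusion
  intro ω hω
  simp only [Set.mem_setOf_eq]
  intro t ht
  have hGlt : G t ω < c := (Set.mem_iInter.1 hω t) t le_rfl
  have htR : (0:ℝ) < (t : ℝ) := by exact_mod_cast Nat.pos_of_ne_zero (by omega)
  have hbt := hb_pos t
  have hsqbt : 0 < Real.sqrt (Real.pi / b t) := Real.sqrt_pos.2 (div_pos Real.pi_pos hbt)
  -- real inequality from G t ω < c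
  have hreal : Real.sqrt (Real.pi / b t) * Real.exp (S t ω ^ 2 / (4 * b t)) <
      Real.sqrt (Real.pi / b 0) / α := by
    have := (ENNReal.ofReal_lt_ofReal_iff (div_pos hs0_pos hα0)).1 hGlt
    exact this
  have hratio : Real.sqrt (Real.pi / b 0) / Real.sqrt (Real.pi / b t) =
      Real.sqrt ((t : ℝ) * β ^ 2 + 1) := by
    rw [← Real.sqrt_div (by positivity)]
    congr 1
    field_simp [hb_def]
    simp only [hb_def]
    field_simp
    simp
  have hexp_lt : Real.exp (S t ω ^ 2 / (4 * b t)) <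
      Real.sqrt ((t : ℝ) * β ^ 2 + 1) / α := by
    have h1 : Real.exp (S t ω ^ 2 / (4 * b t)) <
        (Real.sqrt (Real.pi / b 0) / α) / Real.sqrt (Real.pi / b t) :=
      (lt_div_iff₀ hsqbt).2 (by rw [mul_comm]; exact hreal)
    calc Real.exp (S t ω ^ 2 / (4 * b t))
        < (Real.sqrt (Real.pi / b 0) / α) / Real.sqrt (Real.pi / b t) := h1
      _ = (Real.sqrt (Real.pi / b 0) / Real.sqrt (Real.pi / b t)) / α := by ring
      _ = Real.sqrt ((t : ℝ) * β ^ 2 + 1) / α := by rw [hratio]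
  set L : ℝ := Real.log (Real.sqrt ((t : ℝ) * β ^ 2 + 1) / α) with hL_def
  have hsq1 : (1:ℝ) ≤ Real.sqrt ((t : ℝ) * β ^ 2 + 1) := by
    have h := Real.sqrt_le_sqrt (show (1:ℝ) ≤ (t : ℝ) * β ^ 2 + 1 by
      nlinarith [mul_nonneg (Nat.cast_nonneg t : (0:ℝ) ≤ (t:ℝ)) (sq_nonneg β)])
    simpa using h
  have hargpos : 0 < Real.sqrt ((t : ℝ) * β ^ 2 + 1) / α := by positivity
  have hL_nonneg : 0 ≤ L := by
    apply Real.log_nonneg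
    rw [le_div_iff₀ hα0]
    nlinarith
  have hsq_le : S t ω ^ 2 ≤ 4 * b t * L := by
    have h1 : S t ω ^ 2 / (4 * b t) < L := (Real.lt_log_iff_exp_lt hargpos).2 hexp_lt
    have h2 : (0:ℝ) < 4 * b t := by positivity
    nlinarith [(div_lt_iff₀ h2).1 h1]
  -- rewrite the empirical mean difference
  have hsum : ∑ i ∈ Finset.Icc 1 t, (Z i ω - (1 - r) / 2) =
      S t ω + r * ∑ i ∈ Finset.Icc 1 t, μs i := by
    have h : ∀ i ∈ Finset.Icc 1 t, Z i ω - (1 - r) / 2 =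
        (Z i ω - (r * μs i + (1 - r) / 2)) + r * μs i := fun i _ => by ring
    rw [Finset.sum_congr rfl h, Finset.sum_add_distrib, ← Finset.mul_sum]
  have hlhs : (∑ i ∈ Finset.Icc 1 t, (Z i ω - (1 - r) / 2)) / ((t : ℝ) * r) -
      (1 / (t : ℝ)) * ∑ i ∈ Finset.Icc 1 t, μs i = S t ω / ((t : ℝ) * r) := by
    rw [hsum]
    field_simp
    ring
  rw [hlhs]
  -- final computation
  have hQ : ((t : ℝ) * β ^ 2 + 1) / (2 * ((t : ℝ) * r * β) ^ 2) * L =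
      (4 * b t * L) / ((t : ℝ) * r) ^ 2 := by
    have hbt' : b t = ((t : ℝ) * β ^ 2 + 1) / (8 * β ^ 2) := rfl
    rw [hbt']
    ring
  rw [hQ]
  have htr : (0:ℝ) < (t : ℝ) * r := mul_pos htR hr0
  rw [abs_div, abs_of_pos htr, Real.sqrt_div (by positivity), Real.sqrt_sq htr.le]
  gcongr
  rw [← Real.sqrt_sq_eq_abs]
  exact Real.sqrt_le_sqrt hsq_le
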